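/- Let 𝓗 be a complex Hilbert space, H : ℝ → (𝓗 →L[ℂ] 𝓗) a differentiable family of bounded self-adjoint operators, E : ℝ → ℝ differentiable, and χ : ℝ → 𝓗 differentiable with ‖χ(k)‖ = 1 and H(k)χ(k) = E(k)·χ(k) for every k ∈ ℝ. Then for every k ∈ ℝ the Hellmann–Feynman formula holds: E'(k) = ⟨χ(k), H'(k) χ(k)⟩, i.e. the inner product ⟨χ(k), H'(k)χ(k)⟩ is real and equals the derivative of the eigenvalue. -/

import Mathlib

noncomputable section

/-- the Hellmann–Feynman formula `E'(k) = ⟨χ(k), H'(k) χ(k)⟩` for a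
differentiable family of bounded self-adjoint operators with normalized
differentiable eigenvectors. -/
theorem hellmann_feynman {𝓗 : Type*} [NormedAddCommGroup 𝓗]
    [InnerProductSpace ℂ 𝓗] [CompleteSpace 𝓗]
    (H H' : ℝ → 𝓗 →L[ℂ] 𝓗) (E E' : ℝ → ℝ) (χ χ' : ℝ → 𝓗)
    (hHsa : ∀ k, IsSelfAdjoint (H k))
    (hH : ∀ k, HasDerivAt H (H' k) k)
    (hE : ∀ k, HasDerivAt E (E' k) k)
    (hχ : ∀ k, HasDerivAt χ (χ' k) k)
    (hnorm : ∀ k, ‖χ k‖ = 1)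
    (heig : ∀ k, H k (χ k) = (E k : ℂ) • χ k) :
    ∀ k : ℝ, (inner ℂ (χ k) (H' k (χ k)) : ℂ) = (E' k : ℂ) := by
  intro k
  -- restrict scalars to ℝ to use clm_apply
  set L : (𝓗 →L[ℂ] 𝓗) →L[ℝ] (𝓗 →L[ℝ] 𝓗) :=
    ContinuousLinearMap.restrictScalarsL ℂ 𝓗 𝓗 ℝ ℝ with hL
  have hHr : HasDerivAt (fun t => (H t).restrictScalars ℝ)
      ((H' k).restrictScalars ℝ) k :=
    L.hasFDerivAt.comp_hasDerivAt k (hH k)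
  -- derivative of k ↦ H k (χ k)
  have hHx : HasDerivAt (fun t => H t (χ t))
      ((H' k) (χ k) + (H k) (χ' k)) k := hHr.clm_apply (hχ k)
  -- derivative of k ↦ ⟪χ k, H k (χ k)⟫
  have hg : HasDerivAt (fun t => (inner ℂ (χ t) (H t (χ t)) : ℂ))
      ((inner ℂ (χ k) ((H' k) (χ k) + (H k) (χ' k)) : ℂ)
        + inner ℂ (χ' k) (H k (χ k))) k := (hχ k).inner ℂ hHx
  -- the function equals E (coerced)
  have hfun : (fun t => (inner ℂ (χ t) (H t (χ t)) : ℂ)) = fun t => ((E t : ℝ) : ℂ) := by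
    funext t
    rw [heig t, inner_smul_right]
    have : (inner ℂ (χ t) (χ t) : ℂ) = 1 := by
      rw [inner_self_eq_norm_sq_to_K, hnorm t]; norm_num
    rw [this, mul_one]
  have hg2 : HasDerivAt (fun t => (inner ℂ (χ t) (H t (χ t)) : ℂ)) ((E' k : ℂ)) k := by
    rw [hfun]
    exact Complex.ofRealCLM.hasFDerivAt.comp_hasDerivAt k (hE k)
  have hkey : (inner ℂ (χ k) ((H' k) (χ k) + (H k) (χ' k)) : ℂ)
        + inner ℂ (χ' k) (H k (χ k)) = (E' k : ℂ) := hg.unique hg2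
  -- norm condition: derivative of ⟪χ,χ⟫ is 0
  have hn : HasDerivAt (fun t => (inner ℂ (χ t) (χ t) : ℂ))
      ((inner ℂ (χ k) (χ' k) : ℂ) + inner ℂ (χ' k) (χ k)) k := (hχ k).inner ℂ (hχ k)
  have hn2 : HasDerivAt (fun t => (inner ℂ (χ t) (χ t) : ℂ)) 0 k := by
    have : (fun t => (inner ℂ (χ t) (χ t) : ℂ)) = fun _ => (1 : ℂ) := by
      funext t
      rw [inner_self_eq_norm_sq_to_K, hnorm t]; norm_num
    rw [this]; exact hasDerivAt_const k 1
  have hzero : (inner ℂ (χ k) (χ' k) : ℂ) + inner ℂ (χ' k) (χ k) = 0 := hn.unique hn2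
  -- use self-adjointness and eigenvalue equation
  have hsa : (inner ℂ (χ k) (H k (χ' k)) : ℂ) = (E k : ℂ) * inner ℂ (χ k) (χ' k) := by
    rw [← ContinuousLinearMap.adjoint_inner_left, (hHsa k).adjoint_eq, heig k,
      inner_smul_left, Complex.conj_ofReal]
  have heg : (inner ℂ (χ' k) (H k (χ k)) : ℂ) = (E k : ℂ) * inner ℂ (χ' k) (χ k) := by
    rw [heig k, inner_smul_right]
  rw [inner_add_right, hsa, heg] at hkey
  have : (inner ℂ (χ k) (H' k (χ k)) : ℂ)
      + (E k : ℂ) * ((inner ℂ (χ k) (χ' k) : ℂ) + inner ℂ (χ' k) (χ k)) = (E' k : ℂ) := by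
    ring_nf; ring_nf at hkey; linear_combination hkey
  rwa [hzero, mul_zero, add_zero] at this
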